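/- Let u ∈ C^{1/2}([0,1]) with Hölder seminorm H, let V_{2-}^(n) = {k/2^{n+1} : 0 ≤ k ≤ 2^n - 1} and V_{2+}^(n) = {1 - k/2^{n+1} : 0 ≤ k ≤ 2^n - 1}, and define Avg u(x) for x ∈ V_{2-}^(n) as the average of u over [x, x + 2^{-(n+1)}) and for y ∈ V_{2+}^(n) as the average over (y - 2^{-(n+1)}, y]. Then for all x ∈ V_{2-}^(n) and y ∈ V_{2+}^(n), |Avg u(x) - Avg u(y)| ≤ H |y - x|^{1/2}. -/

import Mathlib

/-- Average of `u` over `[x, x + 2^{-(n+1)})`, used for nodes of `V_{2-}^(n)`. -/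
noncomputable def avgLeft (u : ℝ → ℝ) (n : ℕ) (x : ℝ) : ℝ :=
  (2 : ℝ) ^ (n + 1) * ∫ t in x..(x + (1 / 2 : ℝ) ^ (n + 1)), u t

/-- Average of `u` over `(y - 2^{-(n+1)}, y]`, used for nodes of `V_{2+}^(n)`. -/
noncomputable def avgRight (u : ℝ → ℝ) (n : ℕ) (y : ℝ) : ℝ :=
  (2 : ℝ) ^ (n + 1) * ∫ t in (y - (1 / 2 : ℝ) ^ (n + 1))..y, u t

lemma holder_continuousOn (u : ℝ → ℝ) (H : ℝ)
    (hu : ∀ x ∈ Set.Icc (0 : ℝ) 1, ∀ y ∈ Set.Icc (0 : ℝ) 1,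
      |u x - u y| ≤ H * Real.sqrt |x - y|) :
    ContinuousOn u (Set.Icc (0 : ℝ) 1) := by
  intro a ha
  rw [Metric.continuousWithinAt_iff]
  intro ε hε
  have hH1 : (0:ℝ) < |H| + 1 := by positivity
  refine ⟨(ε / (|H| + 1)) ^ 2, by positivity, fun {b} hb hdist => ?_⟩
  have h1 : |u b - u a| ≤ H * Real.sqrt |b - a| := hu b hb a ha
  have h2 : Real.sqrt |b - a| < ε / (|H| + 1) := by
    have : |b - a| < (ε / (|H| + 1)) ^ 2 := by
      simpa [Real.dist_eq] using hdist
    calc Real.sqrt |b - a| < Real.sqrt ((ε / (|H| + 1)) ^ 2) :=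
          Real.sqrt_lt_sqrt (abs_nonneg _) this
      _ = ε / (|H| + 1) := Real.sqrt_sq (by positivity)
  calc dist (u b) (u a) = |u b - u a| := Real.dist_eq _ _
    _ ≤ H * Real.sqrt |b - a| := h1
    _ ≤ (|H| + 1) * Real.sqrt |b - a| := by
        apply mul_le_mul_of_nonneg_right _ (Real.sqrt_nonneg _)
        calc H ≤ |H| := le_abs_self H
          _ ≤ |H| + 1 := by linarith
    _ < (|H| + 1) * (ε / (|H| + 1)) := by
        exact mul_lt_mul_of_pos_left h2 hH1
    _ = ε := by field_simp

theorem stmt7 (u : ℝ → ℝ) (H : ℝ) (hH : 0 ≤ H)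
    (hu : ∀ x ∈ Set.Icc (0 : ℝ) 1, ∀ y ∈ Set.Icc (0 : ℝ) 1,
      |u x - u y| ≤ H * Real.sqrt |x - y|)
    (n k l : ℕ) (hk : k < 2 ^ n) (hl : l < 2 ^ n) :
    |avgLeft u n ((k : ℝ) / 2 ^ (n + 1)) - avgRight u n (1 - (l : ℝ) / 2 ^ (n + 1))|
      ≤ H * Real.sqrt ((1 - (l : ℝ) / 2 ^ (n + 1)) - (k : ℝ) / 2 ^ (n + 1)) := by
  have hcont := holder_continuousOn u H hu
  set P : ℝ := 2 ^ (n + 1) with hP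
  have hPpos : (0:ℝ) < P := by positivity
  have hδ : ((1/2 : ℝ)) ^ (n + 1) = 1 / P := by
    rw [hP, div_pow, one_pow]
  set δ : ℝ := 1 / P with hδdef
  have hδpos : 0 < δ := by positivity
  set x : ℝ := (k : ℝ) / P with hx
  set y : ℝ := 1 - (l : ℝ) / P with hy
  -- numeric bounds
  have hk' : (k : ℝ) ≤ 2 ^ n - 1 := by
    have : (k : ℝ) + 1 ≤ 2 ^ n := by exact_mod_cast Nat.succ_le_of_lt hk
    linarith
  have hl' : (l : ℝ) ≤ 2 ^ n - 1 := by
    have : (l : ℝ) + 1 ≤ 2 ^ n := by exact_mod_cast Nat.succ_le_of_lt hl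
    linarith
  have hPeq : P = 2 * 2 ^ n := by rw [hP]; ring
  have hx0 : 0 ≤ x := by positivity
  have hxδ : x + δ ≤ 1/2 := by
    rw [hx, hδdef, hPeq]
    rw [← add_div, div_le_iff₀ (by positivity)]
    have : (2:ℝ)^n ≤ 2^n := le_refl _
    nlinarith [hk']
  have hyδ : (1:ℝ)/2 ≤ y - δ := by
    have h1 : ((l:ℝ)+1)/P ≤ 1/2 := by
      rw [div_le_iff₀ hPpos, hPeq]; nlinarith [hl']
    have h2 : y - δ = 1 - ((l:ℝ)+1)/P := by rw [hy, hδdef]; ring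
    rw [h2]; linarith
  have hy1 : y ≤ 1 := by
    rw [hy]
    have : 0 ≤ (l:ℝ)/P := by positivity
    linarith
  set c : ℝ := y - δ - x with hc
  have hc0 : 0 ≤ c := by
    have h1 : x + δ ≤ y - δ := le_trans hxδ hyδ
    rw [hc]; linarith
  have hcle : c ≤ y - x := by rw [hc]; linarith
  -- subset facts
  have hsub1 : Set.uIcc x (x + δ) ⊆ Set.Icc (0:ℝ) 1 := by
    rw [Set.uIcc_of_le (by linarith)]
    intro t ht
    exact ⟨le_trans hx0 ht.1, by linarith [ht.2]⟩
  have hsub2 : Set.uIcc (y - δ) y ⊆ Set.Icc (0:ℝ) 1 := by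
    rw [Set.uIcc_of_le (by linarith)]
    intro t ht
    exact ⟨by linarith [ht.1], le_trans ht.2 hy1⟩
  have hint1 : IntervalIntegrable u MeasureTheory.volume x (x + δ) :=
    (hcont.mono hsub1).intervalIntegrable
  have hint2 : IntervalIntegrable u MeasureTheory.volume (y - δ) y :=
    (hcont.mono hsub2).intervalIntegrable
  have hint2' : IntervalIntegrable (fun t => u (t + c)) MeasureTheory.volume x (x + δ) := by
    have := hint2.comp_add_right c
    have e1 : y - δ - c = x := by rw [hc]; ring
    have e2 : y - c = x + δ := by rw [hc]; ring
    rwa [e1, e2] at this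
  -- rewrite avgRight integral as shift
  have hshift : (∫ t in (y - δ)..y, u t) = ∫ t in x..(x + δ), u (t + c) := by
    rw [intervalIntegral.integral_comp_add_right u c]
    congr 1 <;> rw [hc] <;> ring
  have key : |avgLeft u n x - avgRight u n y|
      = P * |∫ t in x..(x + δ), (u t - u (t + c))| := by
    rw [avgLeft, avgRight, hδ, hshift, ← hP, ← mul_sub,
      ← intervalIntegral.integral_sub hint1 hint2', abs_mul, abs_of_pos hPpos]
  rw [key]
  -- pointwise bound
  have hbound : ∀ t ∈ Set.uIoc x (x + δ), ‖u t - u (t + c)‖ ≤ H * Real.sqrt (y - x) := by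
    intro t ht
    have ht' : t ∈ Set.uIcc x (x + δ) := Set.uIoc_subset_uIcc ht
    have ht1 : t ∈ Set.Icc (0:ℝ) 1 := hsub1 ht'
    rw [Set.uIcc_of_le (by linarith)] at ht'
    have htc : t + c ∈ Set.Icc (0:ℝ) 1 := by
      constructor
      · linarith [ht1.1]
      · have : t ≤ x + δ := ht'.2
        have : t + c ≤ x + δ + c := by linarith
        have : x + δ + c = y := by rw [hc]; ring
        linarith [ht'.2]
    have h1 : |u t - u (t + c)| ≤ H * Real.sqrt |t - (t + c)| := hu t ht1 (t + c) htc
    have h2 : |t - (t + c)| = c := by rw [abs_sub_comm]; simp [abs_of_nonneg hc0]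
    rw [Real.norm_eq_abs]
    calc |u t - u (t + c)| ≤ H * Real.sqrt c := by rwa [h2] at h1
      _ ≤ H * Real.sqrt (y - x) :=
        mul_le_mul_of_nonneg_left (Real.sqrt_le_sqrt hcle) hH
  have habs : |∫ t in x..(x + δ), (u t - u (t + c))|
      ≤ (H * Real.sqrt (y - x)) * |(x + δ) - x| := by
    have := intervalIntegral.norm_integral_le_of_norm_le_const hbound
    simpa [Real.norm_eq_abs] using this
  have : P * |∫ t in x..(x + δ), (u t - u (t + c))|
      ≤ P * ((H * Real.sqrt (y - x)) * δ) := by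
    apply mul_le_mul_of_nonneg_left _ (le_of_lt hPpos)
    calc |∫ t in x..(x + δ), (u t - u (t + c))|
        ≤ (H * Real.sqrt (y - x)) * |(x + δ) - x| := habs
      _ = (H * Real.sqrt (y - x)) * δ := by
          congr 1; rw [add_sub_cancel_left, abs_of_pos hδpos]
  calc P * |∫ t in x..(x + δ), (u t - u (t + c))| ≤ P * ((H * Real.sqrt (y - x)) * δ) := this
    _ = H * Real.sqrt (y - x) := by
        rw [hδdef]; field_simp
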